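/- Let n ≥ 3 and m be coprime positive integers with m < ⌈n/2⌉. Then the number of integers a with 1 ≤ a ≤ n − 1 such that there exist no integers b₁, b₃ with 0 < b₁, b₃ ≤ a + 1 and b₁ − b₃ ≡ −m (mod n) is exactly m − 1. -/

import Mathlib

open scoped Classical

/-- Combinatorial core of Theorem 2.11 of the paper: for coprime `n ≥ 3` and
`0 < m < ⌈n/2⌉`, exactly `m - 1` of the integers `a` with `1 ≤ a ≤ n - 1`
admit no `0 < b₁, b₃ ≤ a + 1` with `b₁ - b₃ ≡ -m (mod n)`. -/
theorem stmt_18 (n m : ℕ) (hn : 3 ≤ n) (hm : 0 < m) (hcop : Nat.Coprime n m)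
    (hlt : m < (n + 1) / 2) :
    ((Finset.Icc 1 (n - 1)).filter fun a : ℕ =>
        ¬ ∃ b₁ b₃ : ℤ, 0 < b₁ ∧ b₁ ≤ (a : ℤ) + 1 ∧ 0 < b₃ ∧ b₃ ≤ (a : ℤ) + 1 ∧
            b₁ - b₃ ≡ -(m : ℤ) [ZMOD (n : ℤ)]).card = m - 1 := by
  have h2m : 2 * m ≤ n - 1 := by omega
  have hset : ((Finset.Icc 1 (n - 1)).filter fun a : ℕ =>
        ¬ ∃ b₁ b₃ : ℤ, 0 < b₁ ∧ b₁ ≤ (a : ℤ) + 1 ∧ 0 < b₃ ∧ b₃ ≤ (a : ℤ) + 1 ∧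
            b₁ - b₃ ≡ -(m : ℤ) [ZMOD (n : ℤ)]) = Finset.Icc 1 (m - 1) := by
    ext a
    simp only [Finset.mem_filter, Finset.mem_Icc]
    constructor
    · rintro ⟨⟨h1, h2⟩, hno⟩
      refine ⟨h1, ?_⟩
      by_contra h
      push_neg at h
      have ham : m ≤ a := by omega
      exact hno ⟨1, (m : ℤ) + 1, by norm_num, by
        have : (1 : ℤ) ≤ (a : ℤ) := by exact_mod_cast h1
        linarith, by positivity, by
        have : (m : ℤ) ≤ (a : ℤ) := by exact_mod_cast ham
        linarith, by
        show (1 - ((m : ℤ) + 1)) % n = (-(m : ℤ)) % n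
        ring_nf⟩
    · rintro ⟨h1, h2⟩
      refine ⟨⟨h1, by omega⟩, ?_⟩
      rintro ⟨b₁, b₃, hb1, hb1', hb3, hb3', hmod⟩
      have hdvd : (n : ℤ) ∣ (-(m : ℤ)) - (b₁ - b₃) := Int.ModEq.dvd hmod
      have hdvd' : (n : ℤ) ∣ (b₁ - b₃ + m) := by
        have h := (dvd_neg).mpr hdvd
        rw [show b₁ - b₃ + (m : ℤ) = -((-(m : ℤ)) - (b₁ - b₃)) by ring]
        exact (dvd_neg (a := (n : ℤ))).mpr hdvd
      have ha : (a : ℤ) ≤ (m : ℤ) - 1 := by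
        have : a ≤ m - 1 := h2
        omega
      have hpos : 0 < b₁ - b₃ + m := by
        have : (1 : ℤ) ≤ m := by exact_mod_cast hm
        linarith
      have hle : (n : ℤ) ≤ b₁ - b₃ + m := Int.le_of_dvd hpos hdvd'
      have h2m' : 2 * (m : ℤ) ≤ (n : ℤ) - 1 := by
        have : ((2 * m : ℕ) : ℤ) ≤ ((n - 1 : ℕ) : ℤ) := by exact_mod_cast h2m
        push_cast at this
        omega
      linarith
  rw [hset, Nat.card_Icc]
  omega
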